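/- Let X be a metric space, E and F normed spaces, and Φ: X × E → F a function. Then the function x ↦ Φ(x, f(x)) is continuous on X for every continuous function f: X → E if and only if Φ is continuous at every point of X' × E. -/

import Mathlib

open Topology Filter Set

namespace Stmt6

/-- The set of accumulation points of a topological space. -/
def accPts (X : Type*) [TopologicalSpace X] : Set X := {x | 𝓝[≠] x ≠ ⊥}

/-- Gluing continuous functions on two closed sets. -/
lemma contOn_union {α β : Type*} [TopologicalSpace α] [TopologicalSpace β] {f : α → β}
    {s t : Set α} (hs : IsClosed s) (ht : IsClosed t)
    (hfs : ContinuousOn f s) (hft : ContinuousOn f t) : ContinuousOn f (s ∪ t) := by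
  intro z hz
  have h1 : ContinuousWithinAt f s z := by
    by_cases h : z ∈ s
    · exact hfs z h
    · exact continuousWithinAt_of_notMem_closure (by rwa [hs.closure_eq])
  have h2 : ContinuousWithinAt f t z := by
    by_cases h : z ∈ t
    · exact hft z h
    · exact continuousWithinAt_of_notMem_closure (by rwa [ht.closure_eq])
  exact h1.union h2

open Classical in
/-- Piecewise linear function with `hfun r w e (r k) = e + w k` and `hfun r w e 0 = e`. -/
noncomputable def hfun {E : Type*} [NormedAddCommGroup E] [NormedSpace ℝ E]
    (r : ℕ → ℝ) (w : ℕ → E) (e : E) (t : ℝ) : E :=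
  if t ≤ 0 then e
  else if r 0 ≤ t then e + w 0
  else if hex : ∃ k, r (k + 1) ≤ t then
    e + w (Nat.find hex + 1) +
      ((t - r (Nat.find hex + 1)) / (r (Nat.find hex) - r (Nat.find hex + 1))) •
        (w (Nat.find hex) - w (Nat.find hex + 1))
  else e

section hfun

variable {E : Type*} [NormedAddCommGroup E] [NormedSpace ℝ E]
  (r : ℕ → ℝ) (w : ℕ → E) (e : E)

lemma hfun_nonpos {t : ℝ} (ht : t ≤ 0) : hfun r w e t = e := by
  rw [hfun, if_pos ht]

lemma hfun_top (hr0 : 0 < r 0) {t : ℝ} (ht : r 0 ≤ t) : hfun r w e t = e + w 0 := by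
  rw [hfun, if_neg (not_le.mpr (lt_of_lt_of_le hr0 ht)), if_pos ht]

lemma exists_rle (hrs : StrictAnti r) (hrt : Tendsto r atTop (𝓝 0)) {t : ℝ} (ht : 0 < t) :
    ∃ k, r (k + 1) ≤ t := by
  obtain ⟨k, hk⟩ := (hrt.eventually (gt_mem_nhds ht)).exists
  exact ⟨k, le_of_lt (lt_of_le_of_lt (hrs.antitone (Nat.le_succ k)) hk)⟩

lemma find_eq (hrs : StrictAnti r) {t : ℝ} {k : ℕ} (hex : ∃ j, r (j + 1) ≤ t)
    (h1 : r (k + 1) ≤ t) (h2 : t < r k) : Nat.find hex = k := by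
  rw [Nat.find_eq_iff]
  refine ⟨h1, fun m hm => not_le.mpr (lt_of_lt_of_le h2 (hrs.antitone (by omega)))⟩

lemma hfun_eval_mid (hrs : StrictAnti r) {t : ℝ} {k : ℕ} (h0 : 0 < t)
    (h1 : r (k + 1) ≤ t) (h2 : t < r k) :
    hfun r w e t = e + w (k + 1) + ((t - r (k + 1)) / (r k - r (k + 1))) • (w k - w (k + 1)) := by
  have hex : ∃ j, r (j + 1) ≤ t := ⟨k, h1⟩
  have hlt : ¬ r 0 ≤ t := not_le.mpr (lt_of_lt_of_le h2 (hrs.antitone (Nat.zero_le k)))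
  rw [hfun, if_neg (not_le.mpr h0), if_neg hlt, dif_pos hex, find_eq r hrs hex h1 h2]

lemma hfun_at_r (hr0 : ∀ k, 0 < r k) (hrs : StrictAnti r) (k : ℕ) :
    hfun r w e (r k) = e + w k := by
  cases k with
  | zero => exact hfun_top r w e (hr0 0) le_rfl
  | succ k =>
      rw [hfun_eval_mid r w e hrs (hr0 (k + 1)) le_rfl (hrs (Nat.lt_succ_self k))]
      simp

lemma hfun_eqOn_Icc (hr0 : ∀ k, 0 < r k) (hrs : StrictAnti r) (k : ℕ) :
    EqOn (hfun r w e)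
      (fun t => e + w (k + 1) + ((t - r (k + 1)) / (r k - r (k + 1))) • (w k - w (k + 1)))
      (Icc (r (k + 1)) (r k)) := by
  intro t ht
  obtain ⟨h1, h2⟩ := ht
  rcases eq_or_lt_of_le h2 with heq | hlt
  · rw [heq, hfun_at_r r w e hr0 hrs k]
    have hne : r k - r (k + 1) ≠ 0 := ne_of_gt (sub_pos.mpr (hrs (Nat.lt_succ_self k)))
    simp only [div_self hne, one_smul]
    abel
  · exact hfun_eval_mid r w e hrs (lt_of_lt_of_le (hr0 (k + 1)) h1) h1 hlt

lemma hfun_contOn_Ici (hr0 : ∀ k, 0 < r k) (hrs : StrictAnti r) :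
    ∀ m, ContinuousOn (hfun r w e) (Ici (r m)) := by
  intro m
  induction m with
  | zero =>
      exact continuousOn_const.congr fun t ht => hfun_top r w e (hr0 0) ht
  | succ m ih =>
      rw [← Icc_union_Ici_eq_Ici (hrs (Nat.lt_succ_self m)).le]
      refine contOn_union isClosed_Icc isClosed_Ici ?_ ih
      have hcont : Continuous (fun t : ℝ =>
          e + w (m + 1) + ((t - r (m + 1)) / (r m - r (m + 1))) • (w m - w (m + 1))) :=
        continuous_const.add
          (((continuous_id.sub continuous_const).div_const _).smul continuous_const)
      exact hcont.continuousOn.congr (hfun_eqOn_Icc r w e hr0 hrs m)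

lemma hfun_continuous (hr0 : ∀ k, 0 < r k) (hrs : StrictAnti r)
    (hrt : Tendsto r atTop (𝓝 0)) (hw : Tendsto w atTop (𝓝 0)) :
    Continuous (hfun r w e) := by
  rw [continuous_iff_continuousAt]
  intro t
  rcases lt_trichotomy t 0 with ht | ht | ht
  · have hev : hfun r w e =ᶠ[𝓝 t] fun _ => e := by
      filter_upwards [Iio_mem_nhds ht] with s hs
      exact hfun_nonpos r w e (le_of_lt hs)
    exact hev.continuousAt
  · subst ht
    rw [Metric.continuousAt_iff]
    intro ε hε
    obtain ⟨N, hN⟩ : ∃ N, ∀ n ≥ N, ‖w n‖ < ε / 3 := by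
      have := hw.eventually (Metric.ball_mem_nhds 0 (by positivity : (0:ℝ) < ε / 3))
      simpa [Metric.mem_ball, dist_zero_right] using eventually_atTop.mp this
    refine ⟨r N, hr0 N, ?_⟩
    intro a ha
    rw [hfun_nonpos r w e le_rfl]
    rcases le_or_gt a 0 with h | h
    · rw [hfun_nonpos r w e h]; simpa using hε
    · have haN : a < r N := by rwa [Real.dist_eq, sub_zero, abs_of_pos h] at ha
      have ha0 : a < r 0 := lt_of_lt_of_le haN (hrs.antitone (Nat.zero_le N))
      have hex : ∃ j, r (j + 1) ≤ a := exists_rle r hrs hrt h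
      have h1 : r (Nat.find hex + 1) ≤ a := Nat.find_spec hex
      have h2 : a < r (Nat.find hex) := by
        cases hfind : Nat.find hex with
        | zero => exact ha0
        | succ m =>
            have hm : m < Nat.find hex := by omega
            have hmin := Nat.find_min hex hm
            exact not_le.mp hmin
      have hk_ge : N ≤ Nat.find hex := by
        by_contra hcon
        push_neg at hcon
        exact absurd h1 (not_le.mpr (lt_of_lt_of_le haN (hrs.antitone hcon)))
      set k := Nat.find hex with hk
      rw [hfun_eval_mid r w e hrs h h1 h2, dist_eq_norm]
      have hrk : r (k + 1) < r k := hrs (Nat.lt_succ_self k)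
      set s := (a - r (k + 1)) / (r k - r (k + 1)) with hs
      have hs0 : 0 ≤ s := div_nonneg (sub_nonneg.mpr h1) (sub_nonneg.mpr hrk.le)
      have hs1 : s ≤ 1 := (div_le_one (sub_pos.mpr hrk)).mpr (by linarith)
      have heq : e + w (k + 1) + s • (w k - w (k + 1)) - e
          = w (k + 1) + s • (w k - w (k + 1)) := by abel
      rw [heq]
      have hb1 : ‖w (k + 1)‖ < ε / 3 := hN (k + 1) (by omega)
      have hb2 : ‖w k‖ < ε / 3 := hN k hk_ge
      calc ‖w (k + 1) + s • (w k - w (k + 1))‖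
          ≤ ‖w (k + 1)‖ + ‖s • (w k - w (k + 1))‖ := norm_add_le _ _
        _ ≤ ‖w (k + 1)‖ + ‖w k - w (k + 1)‖ := by
            refine add_le_add_right ?_ _
            rw [norm_smul, Real.norm_eq_abs, abs_of_nonneg hs0]
            exact mul_le_of_le_one_left (norm_nonneg _) hs1
        _ ≤ ‖w (k + 1)‖ + (‖w k‖ + ‖w (k + 1)‖) := by
            exact add_le_add_right (norm_sub_le _ _) _
        _ < ε := by linarith
  · obtain ⟨m, hm⟩ := (hrt.eventually (gt_mem_nhds ht)).exists
    exact (hfun_contOn_Ici r w e hr0 hrs m).continuousAt (Ici_mem_nhds hm)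

end hfun

/-- `x ↦ Φ(x, f(x))` is continuous for every continuous `f : X → E` iff
`Φ` is continuous at every point of `X' × E`, where `X'` is the set of
accumulation points of `X`. -/
theorem stmt6 {X E F : Type*} [MetricSpace X]
    [NormedAddCommGroup E] [NormedSpace ℝ E] [NormedAddCommGroup F] [NormedSpace ℝ F]
    (Φ : X × E → F) :
    (∀ f : X → E, Continuous f → Continuous fun x => Φ (x, f x)) ↔
      ∀ x ∈ accPts X, ∀ e : E, ContinuousAt Φ (x, e) := by
  constructor
  · intro H x hx e
    by_contra hc
    rw [Metric.continuousAt_iff] at hc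
    push_neg at hc
    obtain ⟨ε, hε, hbad⟩ := hc
    have hxne : (𝓝[≠] x).NeBot := ⟨hx⟩
    have key : ∀ δ : ℝ, 0 < δ → ∃ p : X × E, p.1 ≠ x ∧ dist p.1 x < δ ∧ dist p.2 e < δ ∧
        ε / 2 ≤ dist (Φ p) (Φ (x, e)) := by
      intro δ hδ
      obtain ⟨p, hp1, hp2⟩ := hbad δ hδ
      rw [Prod.dist_eq, max_lt_iff] at hp1
      by_cases hpx : p.1 = x
      · have hcont : Continuous fun z : X => Φ (z, p.2) := H (fun _ => p.2) continuous_const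
        obtain ⟨δ', hδ', hδ'p⟩ :=
          Metric.continuousAt_iff.mp (hcont.continuousAt (x := x)) (ε / 2) (by linarith)
        have hmem : Metric.ball x (min δ δ') ∩ {x}ᶜ ∈ 𝓝[≠] x :=
          inter_mem (nhdsWithin_le_nhds (Metric.ball_mem_nhds x (lt_min hδ hδ')))
            self_mem_nhdsWithin
        obtain ⟨y, hy⟩ := Filter.nonempty_of_mem hmem
        have hyb : dist y x < min δ δ' := Metric.mem_ball.mp hy.1
        have hyx : y ≠ x := hy.2
        refine ⟨(y, p.2), hyx, lt_of_lt_of_le hyb (min_le_left _ _), hp1.2, ?_⟩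
        have h1 : dist (Φ (y, p.2)) (Φ (x, p.2)) < ε / 2 :=
          hδ'p (lt_of_lt_of_le hyb (min_le_right _ _))
        have hpp : Φ p = Φ (x, p.2) := by rw [← hpx]
        have htri := dist_triangle (Φ (x, p.2)) (Φ (y, p.2)) (Φ (x, e))
        have h2 : ε ≤ dist (Φ (x, p.2)) (Φ (x, e)) := by rwa [hpp] at hp2
        have hcomm : dist (Φ (x, p.2)) (Φ (y, p.2)) = dist (Φ (y, p.2)) (Φ (x, p.2)) :=
          dist_comm _ _
        linarith
      · exact ⟨p, hpx, hp1.1, hp1.2, by linarith⟩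
    have hnemp : Nonempty (X × E) := ⟨(x, e)⟩
    choose! P hP1 hP2 hP3 hP4 using key
    let D : ℕ → ℝ := fun n =>
      Nat.rec (1 : ℝ) (fun k d => min (dist (P d).1 x / 2) (1 / (k + 2 : ℝ))) n
    have hD_zero : D 0 = 1 := rfl
    have hD_succ : ∀ k, D (k + 1) = min (dist (P (D k)).1 x / 2) (1 / (k + 2 : ℝ)) :=
      fun k => rfl
    have hD0 : ∀ k, 0 < D k := by
      intro k
      induction k with
      | zero => rw [hD_zero]; norm_num
      | succ k ih =>
          rw [hD_succ]
          refine lt_min (half_pos (dist_pos.mpr (hP1 _ ih))) (by positivity)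
    have hD_le : ∀ k, D k ≤ 1 / (k + 1 : ℝ) := by
      intro k
      cases k with
      | zero => rw [hD_zero]; norm_num
      | succ k =>
          rw [hD_succ]
          refine le_trans (min_le_right _ _) (le_of_eq ?_)
          push_cast
          ring
    set y : ℕ → X := fun k => (P (D k)).1 with hy_def
    set v : ℕ → E := fun k => (P (D k)).2 with hv_def
    set r : ℕ → ℝ := fun k => dist (y k) x with hr_def
    have hr_pos : ∀ k, 0 < r k := fun k => dist_pos.mpr (hP1 _ (hD0 k))
    have hr_lt : ∀ k, r k < D k := fun k => hP2 _ (hD0 k)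
    have hr_half : ∀ k, r (k + 1) < r k / 2 := by
      intro k
      refine lt_of_lt_of_le (hr_lt (k + 1)) ?_
      rw [hD_succ]
      exact min_le_left _ _
    have hr_anti : StrictAnti r :=
      strictAnti_nat_of_succ_lt fun k => lt_trans (hr_half k) (half_lt_self (hr_pos k))
    have h_one : Tendsto (fun k : ℕ => 1 / (k + 1 : ℝ)) atTop (𝓝 0) :=
      tendsto_one_div_add_atTop_nhds_zero_nat
    have hr_t : Tendsto r atTop (𝓝 0) :=
      squeeze_zero (fun k => (hr_pos k).le) (fun k => (hr_lt k).le.trans (hD_le k)) h_one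
    set w : ℕ → E := fun k => v k - e with hw_def
    have hw_t : Tendsto w atTop (𝓝 0) := by
      rw [tendsto_zero_iff_norm_tendsto_zero]
      refine squeeze_zero (fun k => norm_nonneg _) (fun k => ?_) h_one
      rw [show w k = v k - e from rfl, ← dist_eq_norm]
      exact ((hP3 _ (hD0 k)).le.trans (hD_le k))
    set f : X → E := fun z => hfun r w e (dist z x) with hf_def
    have hf : Continuous f :=
      (hfun_continuous r w e hr_pos hr_anti hr_t hw_t).comp
        (continuous_id.dist continuous_const)
    have hfy : ∀ k, f (y k) = v k := by
      intro k
      show hfun r w e (dist (y k) x) = v k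
      rw [show dist (y k) x = r k from rfl, hfun_at_r r w e hr_pos hr_anti k]
      show e + (v k - e) = v k
      abel
    have hfx : f x = e := by
      show hfun r w e (dist x x) = e
      rw [dist_self]
      exact hfun_nonpos r w e le_rfl
    have hg := H f hf
    have hyx : Tendsto y atTop (𝓝 x) := by
      rw [tendsto_iff_dist_tendsto_zero]
      exact hr_t
    have htend : Tendsto (fun k => Φ (y k, f (y k))) atTop (𝓝 (Φ (x, f x))) :=
      (hg.tendsto x).comp hyx
    rw [hfx] at htend
    have hev := htend.eventually (Metric.ball_mem_nhds _ (by linarith : (0:ℝ) < ε / 2))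
    obtain ⟨k, hk⟩ := hev.exists
    have h4 := hP4 (D k) (hD0 k)
    have heq : Φ (y k, f (y k)) = Φ (P (D k)) := by rw [hfy k]
    rw [heq] at hk
    linarith
  · intro hΦ f hf
    rw [continuous_iff_continuousAt]
    intro x
    by_cases hx : 𝓝[≠] x = ⊥
    · have hopen : IsOpen ({x} : Set X) := (isOpen_singleton_iff_punctured_nhds x).mpr hx
      have hev : (fun z => Φ (z, f z)) =ᶠ[𝓝 x] fun _ => Φ (x, f x) := by
        filter_upwards [hopen.mem_nhds rfl] with z hz
        rw [show z = x from hz]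
      exact hev.continuousAt
    · have h1 : ContinuousAt (fun z : X => (z, f z)) x :=
        continuousAt_id.prodMk hf.continuousAt
      exact Filter.Tendsto.comp (hΦ x hx (f x)) h1

end Stmt6
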